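/- Let G be a simple graph on n ≥ 1 vertices with Sombor spectral radius ρ_1 and forgotten topological index F. Then √(2F/n) ≤ ρ_1 ≤ √(2(n−1)F/n). Equality holds in the lower bound if and only if G is the empty graph or a perfect matching (n/2)K_2. If G is connected, equality holds in the upper bound if and only if G is the complete graph K_n. -/

import Mathlib

open scoped Classical

noncomputable def somborMatrix {V : Type*} [Fintype V] (G : SimpleGraph V) :
    Matrix V V ℝ := fun i j =>
  if G.Adj i j then Real.sqrt ((G.degree i : ℝ) ^ 2 + (G.degree j : ℝ) ^ 2) else 0

lemma somborMatrix_isHermitian {V : Type*} [Fintype V] (G : SimpleGraph V) :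
    (somborMatrix G).IsHermitian := by
  apply Matrix.ext
  intro i j
  simp only [Matrix.conjTranspose_apply, star_trivial, somborMatrix]
  rw [G.adj_comm, add_comm]

/-- The Sombor eigenvalues of `G`. -/
noncomputable def somborEigs {V : Type*} [Fintype V] (G : SimpleGraph V) : V → ℝ :=
  (somborMatrix_isHermitian G).eigenvalues

/-- The Sombor spectral radius (largest Sombor eigenvalue). -/
noncomputable def somborSpecRad {V : Type*} [Fintype V] (G : SimpleGraph V) : ℝ :=
  ⨆ i, somborEigs G i

/-- The Sombor energy. -/
noncomputable def somborEnergy {V : Type*} [Fintype V] (G : SimpleGraph V) : ℝ :=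
  ∑ i, |somborEigs G i|

/-- The Sombor Estrada index. -/
noncomputable def somborEstrada {V : Type*} [Fintype V] (G : SimpleGraph V) : ℝ :=
  ∑ i, Real.exp (somborEigs G i)

/-- The forgotten topological index `F = ∑ d_i ^ 3`. -/
noncomputable def forgottenIndex {V : Type*} [Fintype V] (G : SimpleGraph V) : ℝ :=
  ∑ i, (G.degree i : ℝ) ^ 3

set_option linter.unusedSectionVars false

namespace SomborHelper

open Matrix

section MatrixHelpers

variable {m : Type*} [Fintype m] [DecidableEq m] {A : Matrix m m ℝ}

lemma diag_real (hA : A.IsHermitian) :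
    Matrix.diagonal (RCLike.ofReal ∘ hA.eigenvalues) = Matrix.diagonal hA.eigenvalues := by
  rfl

lemma trace_eq_sum_eigs (hA : A.IsHermitian) : A.trace = ∑ i, hA.eigenvalues i := by
  conv_lhs => rw [hA.spectral_theorem]
  rw [Unitary.conjStarAlgAut_apply, Matrix.trace_mul_cycle]
  rw [(Matrix.mem_unitaryGroup_iff').mp (hA.eigenvectorUnitary).2]
  rw [one_mul, diag_real hA, Matrix.trace_diagonal]

lemma sq_eq (hA : A.IsHermitian) :
    A * A = (hA.eigenvectorUnitary : Matrix m m ℝ) * Matrix.diagonal (fun i => hA.eigenvalues i ^ 2)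
      * (star (hA.eigenvectorUnitary : Matrix m m ℝ)) := by
  conv_lhs => rw [hA.spectral_theorem]
  rw [diag_real hA]
  have h1 : (star (hA.eigenvectorUnitary : Matrix m m ℝ)) *
      ((hA.eigenvectorUnitary : Matrix m m ℝ)) = 1 :=
    (Matrix.mem_unitaryGroup_iff').mp (hA.eigenvectorUnitary).2
  calc ((hA.eigenvectorUnitary : Matrix m m ℝ) * Matrix.diagonal hA.eigenvalues
        * (star (hA.eigenvectorUnitary : Matrix m m ℝ))) *
      ((hA.eigenvectorUnitary : Matrix m m ℝ) * Matrix.diagonal hA.eigenvalues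
        * (star (hA.eigenvectorUnitary : Matrix m m ℝ)))
      = (hA.eigenvectorUnitary : Matrix m m ℝ) * (Matrix.diagonal hA.eigenvalues
        * ((star (hA.eigenvectorUnitary : Matrix m m ℝ)) *
          (hA.eigenvectorUnitary : Matrix m m ℝ)) * Matrix.diagonal hA.eigenvalues)
        * (star (hA.eigenvectorUnitary : Matrix m m ℝ)) := by
        simp only [Matrix.mul_assoc]
    _ = (hA.eigenvectorUnitary : Matrix m m ℝ) * Matrix.diagonal (fun i => hA.eigenvalues i ^ 2)
        * (star (hA.eigenvectorUnitary : Matrix m m ℝ)) := by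
        rw [h1, Matrix.mul_one, Matrix.diagonal_mul_diagonal]
        simp only [Matrix.mul_assoc, sq]

lemma trace_sq_eq_sum_eigs_sq (hA : A.IsHermitian) :
    (A * A).trace = ∑ i, hA.eigenvalues i ^ 2 := by
  rw [sq_eq hA, Matrix.trace_mul_cycle,
    (Matrix.mem_unitaryGroup_iff').mp (hA.eigenvectorUnitary).2, one_mul, Matrix.trace_diagonal]

lemma trace_sq_eq_sum_sq (hA : A.IsHermitian) :
    (A * A).trace = ∑ i, ∑ j, A i j ^ 2 := by
  rw [Matrix.trace]
  simp only [Matrix.diag_apply, Matrix.mul_apply]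
  congr 1; ext i; congr 1; ext j
  rw [sq]
  congr 1
  exact (congrFun (congrFun hA.symm i) j).symm.trans rfl

/-- If all eigenvalues satisfy a quadratic, so does the matrix. -/
lemma quad (hA : A.IsHermitian) (α β : ℝ)
    (h : ∀ i, hA.eigenvalues i ^ 2 = α * hA.eigenvalues i + β) :
    A * A = α • A + β • (1 : Matrix m m ℝ) := by
  rw [sq_eq hA]
  have h1 : ((hA.eigenvectorUnitary : Matrix m m ℝ)) *
      (star (hA.eigenvectorUnitary : Matrix m m ℝ)) = 1 :=
    (Matrix.mem_unitaryGroup_iff).mp (hA.eigenvectorUnitary).2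
  have : Matrix.diagonal (fun i => hA.eigenvalues i ^ 2)
      = α • Matrix.diagonal hA.eigenvalues + β • (1 : Matrix m m ℝ) := by
    ext i j
    by_cases hij : i = j
    · subst hij
      simp [Matrix.diagonal_apply_eq, h i, Matrix.one_apply_eq]
    · simp [Matrix.diagonal_apply_ne _ hij, Matrix.one_apply_ne hij]
  rw [this]
  rw [Matrix.mul_add, Matrix.add_mul]
  congr 1
  · rw [Matrix.mul_smul, Matrix.smul_mul]
    conv_rhs => rw [hA.spectral_theorem, Unitary.conjStarAlgAut_apply, diag_real hA]
  · rw [Matrix.mul_smul, Matrix.smul_mul, Matrix.mul_one, h1]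

/-- decomposition of any vector in eigenbasis, as plain functions -/
lemma eig_facts (hA : A.IsHermitian) :
    ∃ u : m → m → ℝ, (∀ i, A *ᵥ u i = hA.eigenvalues i • u i) ∧
      (∀ i j, u i ⬝ᵥ u j = if i = j then 1 else 0) ∧
      (∀ x : m → ℝ, x = ∑ i, (u i ⬝ᵥ x) • u i) := by
  refine ⟨fun i => ⇑(hA.eigenvectorBasis i), fun i => hA.mulVec_eigenvectorBasis i, ?_, ?_⟩
  · intro i j
    have := hA.eigenvectorBasis.orthonormal
    rw [orthonormal_iff_ite] at this
    have h2 := this i j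
    rw [← h2]
    rw [PiLp.inner_apply]
    simp [dotProduct, mul_comm]
  · intro x
    have hinner : ∀ i, (inner ℝ (hA.eigenvectorBasis i) ((WithLp.equiv 2 (m → ℝ)).symm x) : ℝ)
        = (⇑(hA.eigenvectorBasis i)) ⬝ᵥ x := by
      intro i
      rw [PiLp.inner_apply]
      simp [dotProduct, mul_comm]
    have hx : x = ∑ i, (inner ℝ (hA.eigenvectorBasis i)
        ((WithLp.equiv 2 (m → ℝ)).symm x) : ℝ) • ⇑(hA.eigenvectorBasis i) :=
      by
        have h := congrArg (WithLp.ofLp (p := 2))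
          (hA.eigenvectorBasis.sum_repr' ((WithLp.equiv 2 (m → ℝ)).symm x)).symm
        rw [WithLp.ofLp_sum] at h
        simp only [WithLp.ofLp_smul] at h
        exact h
    conv_lhs => rw [hx]
    exact Finset.sum_congr rfl fun i _ => by rw [hinner i]

lemma sum_dotProduct' (f : m → m → ℝ) (y : m → ℝ) :
    (∑ i, f i) ⬝ᵥ y = ∑ i, f i ⬝ᵥ y := by
  unfold dotProduct
  rw [Finset.sum_comm]
  exact Finset.sum_congr rfl fun i _ => by rw [Finset.sum_apply, Finset.sum_mul]

lemma dotProduct_sum' (y : m → ℝ) (f : m → m → ℝ) :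
    y ⬝ᵥ (∑ i, f i) = ∑ i, y ⬝ᵥ f i := by
  rw [dotProduct_comm, sum_dotProduct']
  exact Finset.sum_congr rfl fun i _ => dotProduct_comm _ _

lemma mulVec_sum' (f : m → m → ℝ) : A *ᵥ (∑ i, f i) = ∑ i, A *ᵥ f i := by
  rw [← Matrix.mulVecLin_apply, map_sum]
  simp [Matrix.mulVecLin_apply]

lemma rayleigh_decomp (hA : A.IsHermitian) (x : m → ℝ) :
    ∃ c : m → ℝ, x ⬝ᵥ (A *ᵥ x) = ∑ i, hA.eigenvalues i * c i ^ 2 ∧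
      x ⬝ᵥ x = ∑ i, c i ^ 2 := by
  obtain ⟨u, heig, horth, hdecomp⟩ := eig_facts hA
  set c : m → ℝ := fun i => u i ⬝ᵥ x with hc
  have hxu : ∀ j, x ⬝ᵥ u j = c j := by
    intro j
    conv_lhs => rw [hdecomp x]
    rw [sum_dotProduct']
    simp only [smul_dotProduct, smul_eq_mul, horth]
    simp [hc]
  refine ⟨c, ?_, ?_⟩
  · have hAx : A *ᵥ x = ∑ i, c i • (hA.eigenvalues i • u i) := by
      conv_lhs => rw [hdecomp x]
      rw [mulVec_sum']
      simp only [Matrix.mulVec_smul, heig]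
      rfl
    rw [hAx, dotProduct_sum']
    refine Finset.sum_congr rfl fun i _ => ?_
    rw [dotProduct_smul, dotProduct_smul, hxu i]
    simp only [smul_eq_mul]; ring
  · have h0 : (∑ i, (u i ⬝ᵥ x) • u i) ⬝ᵥ x = x ⬝ᵥ x := by rw [← hdecomp x]
    rw [← h0, sum_dotProduct']
    refine Finset.sum_congr rfl fun i _ => ?_
    rw [smul_dotProduct]
    simp only [smul_eq_mul, hc]
    ring

lemma rayleigh_upper (hA : A.IsHermitian) (ρ : ℝ) (hρ : ∀ i, hA.eigenvalues i ≤ ρ)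
    (x : m → ℝ) : x ⬝ᵥ (A *ᵥ x) ≤ ρ * (x ⬝ᵥ x) := by
  obtain ⟨c, h1, h2⟩ := rayleigh_decomp hA x
  rw [h1, h2, Finset.mul_sum]
  exact Finset.sum_le_sum fun i _ =>
    mul_le_mul_of_nonneg_right (hρ i) (sq_nonneg _)

lemma perron (hA : A.IsHermitian) (hpos : ∀ i j, 0 ≤ A i j) (ρ : ℝ)
    (hρ : ∀ i, hA.eigenvalues i ≤ ρ) (k : m) : |hA.eigenvalues k| ≤ ρ := by
  obtain ⟨u, heig, horth, _⟩ := eig_facts hA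
  set v : m → ℝ := u k with hv
  have hvv : v ⬝ᵥ v = 1 := by rw [hv, horth k k]; simp
  have hval : v ⬝ᵥ (A *ᵥ v) = hA.eigenvalues k := by
    rw [hv, heig k, dotProduct_smul, smul_eq_mul, hvv, mul_one]
  set w : m → ℝ := fun i => |v i| with hw
  have hww : w ⬝ᵥ w = 1 := by
    rw [← hvv]; unfold dotProduct
    exact Finset.sum_congr rfl fun i _ => by
      simp [hw, ← sq, sq_abs]
  have habs : |v ⬝ᵥ (A *ᵥ v)| ≤ w ⬝ᵥ (A *ᵥ w) := by
    unfold dotProduct Matrix.mulVec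
    refine le_trans (Finset.abs_sum_le_sum_abs _ _) ?_
    refine Finset.sum_le_sum fun i _ => ?_
    rw [abs_mul]
    unfold dotProduct
    rw [mul_comm, mul_comm (w i) _]
    refine mul_le_mul (le_trans (Finset.abs_sum_le_sum_abs _ _)
      (Finset.sum_le_sum fun j _ => ?_)) le_rfl (abs_nonneg _) ?_
    · rw [abs_mul, abs_of_nonneg (hpos i j)]
    · exact Finset.sum_nonneg fun j _ => mul_nonneg (hpos i j) (abs_nonneg _)
  calc |hA.eigenvalues k| = |v ⬝ᵥ (A *ᵥ v)| := by rw [hval]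
    _ ≤ w ⬝ᵥ (A *ᵥ w) := habs
    _ ≤ ρ * (w ⬝ᵥ w) := rayleigh_upper hA ρ hρ w
    _ = ρ := by rw [hww, mul_one]

lemma eig_sq (hA : A.IsHermitian) (β : ℝ) (h : A * A = β • (1 : Matrix m m ℝ)) (k : m) :
    hA.eigenvalues k ^ 2 = β := by
  obtain ⟨u, heig, horth, _⟩ := eig_facts hA
  have hu : u k ⬝ᵥ u k = 1 := by rw [horth k k]; simp
  have hne : u k ≠ 0 := by
    intro h0
    rw [h0] at hu
    simp [zero_dotProduct] at hu
  have h1 : (A * A) *ᵥ u k = (hA.eigenvalues k ^ 2) • u k := by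
    rw [← Matrix.mulVec_mulVec, heig k, Matrix.mulVec_smul, heig k, smul_smul, sq]
  rw [h, Matrix.smul_mulVec, Matrix.one_mulVec] at h1
  obtain ⟨i, hi⟩ := Function.ne_iff.mp hne
  have := congrFun h1 i
  simp only [Pi.smul_apply, smul_eq_mul] at this
  exact (mul_right_cancel₀ (by simpa using hi) this).symm

end MatrixHelpers

section GraphHelpers

variable {V : Type*} [Fintype V] [DecidableEq V] (G : SimpleGraph V)

lemma sombor_nonneg (i j : V) : 0 ≤ somborMatrix G i j := by
  unfold somborMatrix
  split
  · exact Real.sqrt_nonneg _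
  · exact le_rfl

lemma sombor_pos {i j : V} (h : G.Adj i j) : 0 < somborMatrix G i j := by
  have hd : 0 < G.degree i := by
    rw [G.degree_pos_iff_exists_adj]
    exact ⟨j, h⟩
  unfold somborMatrix
  rw [if_pos h]
  apply Real.sqrt_pos.mpr
  have h1 : (0:ℝ) < (G.degree i : ℝ) ^ 2 := by positivity
  nlinarith [sq_nonneg ((G.degree j : ℝ))]

lemma sombor_diag (i : V) : somborMatrix G i i = 0 := by
  unfold somborMatrix
  rw [if_neg (G.irrefl)]

lemma sombor_sq_entry {i j : V} :
    somborMatrix G i j ^ 2 =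
      if G.Adj i j then ((G.degree i : ℝ) ^ 2 + (G.degree j : ℝ) ^ 2) else 0 := by
  unfold somborMatrix
  split
  · rw [Real.sq_sqrt (by positivity)]
  · rw [zero_pow two_ne_zero]

lemma sum_ite_adj (f : V → ℝ) (i : V) :
    ∑ j, (if G.Adj i j then f j else 0) = ∑ j ∈ G.neighborFinset i, f j := by
  rw [SimpleGraph.neighborFinset_eq_filter, Finset.sum_filter]

lemma sum_sombor_sq :
    ∑ i, ∑ j, somborMatrix G i j ^ 2 = 2 * ∑ i, (G.degree i : ℝ) ^ 3 := by
  have key : ∀ i j, somborMatrix G i j ^ 2 =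
      (if G.Adj i j then (G.degree i : ℝ) ^ 2 else 0)
        + (if G.Adj i j then (G.degree j : ℝ) ^ 2 else 0) := by
    intro i j
    rw [sombor_sq_entry]
    split <;> simp
  have h1 : ∀ i, ∑ j, (if G.Adj i j then (G.degree i : ℝ) ^ 2 else 0)
      = (G.degree i : ℝ) ^ 3 := by
    intro i
    rw [sum_ite_adj G (fun _ => (G.degree i : ℝ) ^ 2) i, Finset.sum_const,
      ← SimpleGraph.card_neighborFinset_eq_degree]
    push_cast
    ring
  have h2 : ∑ i, ∑ j, (if G.Adj i j then (G.degree j : ℝ) ^ 2 else 0)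
      = ∑ i, (G.degree i : ℝ) ^ 3 := by
    rw [Finset.sum_comm]
    refine Finset.sum_congr rfl fun j _ => ?_
    have hsw : ∀ i, (if G.Adj i j then (G.degree j : ℝ) ^ 2 else 0)
        = (if G.Adj j i then (G.degree j : ℝ) ^ 2 else 0) := by
      intro i; rw [G.adj_comm]
    rw [Finset.sum_congr rfl (fun i _ => hsw i), sum_ite_adj G _ j, Finset.sum_const,
      ← SimpleGraph.card_neighborFinset_eq_degree]
    push_cast
    ring
  simp_rw [key]
  rw [Finset.sum_congr rfl (fun i (_ : i ∈ Finset.univ) => Finset.sum_add_distrib),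
    Finset.sum_add_distrib, h2]
  rw [Finset.sum_congr rfl (fun i (_ : i ∈ Finset.univ) => h1 i)]
  ring

end GraphHelpers

end SomborHelper

lemma top_deg (n : ℕ) (v : Fin n)
    (inst : Fintype ((⊤ : SimpleGraph (Fin n)).neighborSet v)) :
    @SimpleGraph.degree (Fin n) ⊤ v inst = n - 1 := by
  have h1 : @SimpleGraph.neighborFinset (Fin n) ⊤ v inst = Finset.univ.erase v := by
    ext j
    rw [SimpleGraph.mem_neighborFinset, Finset.mem_erase]
    simp [ne_comm]
  rw [← SimpleGraph.card_neighborFinset_eq_degree, h1,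
    Finset.card_erase_of_mem (Finset.mem_univ v), Finset.card_univ, Fintype.card_fin]

lemma bot_deg_cube (n : ℕ) (i : Fin n)
    (inst : Fintype ((⊥ : SimpleGraph (Fin n)).neighborSet i)) :
    ((@SimpleGraph.degree (Fin n) ⊥ i inst : ℕ) : ℝ) ^ 3 = 0 := by
  have : @SimpleGraph.degree (Fin n) ⊥ i inst = 0 := by
    rw [← SimpleGraph.card_neighborFinset_eq_degree, Finset.card_eq_zero]
    ext j; simp
  rw [this]
  norm_num

set_option maxHeartbeats 1000000 in
open SomborHelper Matrix in
theorem stmt6 {n : ℕ} (hn : 1 ≤ n) (G : SimpleGraph (Fin n)) :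
    (Real.sqrt (2 * forgottenIndex G / n) ≤ somborSpecRad G ∧
      somborSpecRad G ≤ Real.sqrt (2 * ((n : ℝ) - 1) * forgottenIndex G / n)) ∧
    (Real.sqrt (2 * forgottenIndex G / n) = somborSpecRad G ↔
      G = ⊥ ∨ ∀ v, G.degree v = 1) ∧
    (G.Connected →
      (somborSpecRad G = Real.sqrt (2 * ((n : ℝ) - 1) * forgottenIndex G / n) ↔ G = ⊤)) := by
  classical
  have hS := somborMatrix_isHermitian G
  have hnR : (0:ℝ) < n := by exact_mod_cast hn
  have hNE : Nonempty (Fin n) := Fin.pos_iff_nonempty.mp hn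
  have hbdd : BddAbove (Set.range (somborEigs G)) := (Set.finite_range _).bddAbove
  have hle : ∀ i, somborEigs G i ≤ somborSpecRad G := fun i => le_ciSup hbdd i
  obtain ⟨i₀, hmax⟩ := Finite.exists_max (somborEigs G)
  have hρeq : somborSpecRad G = somborEigs G i₀ := le_antisymm (ciSup_le hmax) (hle i₀)
  have htr : ∑ i, somborEigs G i = 0 := by
    have h1 := trace_eq_sum_eigs hS
    have h2 : (somborMatrix G).trace = 0 := by
      rw [Matrix.trace]
      exact Finset.sum_eq_zero fun i _ => sombor_diag G i
    rw [h2] at h1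
    exact h1.symm
  have hsq : ∑ i, somborEigs G i ^ 2 = 2 * forgottenIndex G := by
    have h1 := trace_sq_eq_sum_eigs_sq hS
    have h2 := trace_sq_eq_sum_sq hS
    have h3 := sum_sombor_sq G
    rw [h2, h3] at h1
    exact h1.symm
  have hFnn : 0 ≤ forgottenIndex G :=
    Finset.sum_nonneg fun i _ => by positivity
  have hρ0 : 0 ≤ somborSpecRad G := by
    by_contra hneg
    push_neg at hneg
    have : ∑ i, somborEigs G i < 0 := by
      calc ∑ i, somborEigs G i ≤ ∑ _i : Fin n, somborSpecRad G :=
            Finset.sum_le_sum fun i _ => hle i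
        _ = n * somborSpecRad G := by rw [Finset.sum_const]; simp [mul_comm]
        _ < 0 := mul_neg_of_pos_of_neg hnR hneg
    rw [htr] at this; exact lt_irrefl 0 this
  have hperron : ∀ i, |somborEigs G i| ≤ somborSpecRad G :=
    perron hS (fun i j => sombor_nonneg G i j) _ hle
  have hsqle : ∀ i, somborEigs G i ^ 2 ≤ somborSpecRad G ^ 2 := by
    intro i
    rw [← sq_abs]
    exact pow_le_pow_left₀ (abs_nonneg _) (hperron i) 2
  -- lower bound
  have hlow2 : 2 * forgottenIndex G / n ≤ somborSpecRad G ^ 2 := by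
    rw [div_le_iff₀ hnR, ← hsq]
    calc ∑ i, somborEigs G i ^ 2 ≤ ∑ _i : Fin n, somborSpecRad G ^ 2 :=
          Finset.sum_le_sum fun i _ => hsqle i
      _ = somborSpecRad G ^ 2 * n := by rw [Finset.sum_const]; simp [mul_comm]
  have hlower : Real.sqrt (2 * forgottenIndex G / n) ≤ somborSpecRad G := by
    calc Real.sqrt (2 * forgottenIndex G / n) ≤ Real.sqrt (somborSpecRad G ^ 2) :=
          Real.sqrt_le_sqrt hlow2
      _ = somborSpecRad G := Real.sqrt_sq hρ0
  -- erase sums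
  have hcard : ((Finset.univ.erase i₀).card : ℝ) = (n : ℝ) - 1 := by
    rw [Finset.card_erase_of_mem (Finset.mem_univ i₀)]
    rw [Finset.card_univ, Fintype.card_fin]
    rw [Nat.cast_sub hn]
    simp
  have hs1 : ∑ i ∈ Finset.univ.erase i₀, somborEigs G i = -somborSpecRad G := by
    have := Finset.add_sum_erase Finset.univ (somborEigs G) (Finset.mem_univ i₀)
    rw [htr] at this
    rw [hρeq]
    linarith
  have hs2 : ∑ i ∈ Finset.univ.erase i₀, somborEigs G i ^ 2
      = 2 * forgottenIndex G - somborSpecRad G ^ 2 := by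
    have := Finset.add_sum_erase Finset.univ (fun i => somborEigs G i ^ 2) (Finset.mem_univ i₀)
    rw [hsq] at this
    rw [hρeq]
    linarith
  -- upper bound
  have hup2 : (n:ℝ) * somborSpecRad G ^ 2 ≤ 2 * ((n:ℝ) - 1) * forgottenIndex G := by
    have hcs := Finset.sum_mul_sq_le_sq_mul_sq (Finset.univ.erase i₀)
      (somborEigs G) (fun _ => (1:ℝ))
    simp only [mul_one, one_pow] at hcs
    rw [hs1, hs2, Finset.sum_const, nsmul_eq_mul] at hcs
    rw [hcard] at hcs
    have hn1 : (0:ℝ) ≤ (n:ℝ) - 1 := by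
      have : (1:ℝ) ≤ (n:ℝ) := by exact_mod_cast hn
      linarith
    nlinarith [hcs]
  have hupper : somborSpecRad G ≤ Real.sqrt (2 * ((n:ℝ) - 1) * forgottenIndex G / n) := by
    have h2 : somborSpecRad G ^ 2 ≤ 2 * ((n:ℝ) - 1) * forgottenIndex G / n := by
      rw [le_div_iff₀ hnR]
      nlinarith [hup2]
    calc somborSpecRad G = Real.sqrt (somborSpecRad G ^ 2) := (Real.sqrt_sq hρ0).symm
      _ ≤ _ := Real.sqrt_le_sqrt h2
  refine ⟨⟨hlower, hupper⟩, ?_, ?_⟩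
  · -- lower equality
    constructor
    · -- forward
      intro h
      have hρ2 : somborSpecRad G ^ 2 = 2 * forgottenIndex G / n := by
        rw [← h, Real.sq_sqrt (by positivity)]
      have hall : ∀ i, somborEigs G i ^ 2 = somborSpecRad G ^ 2 := by
        have hsum0 : ∑ i : Fin n, (somborSpecRad G ^ 2 - somborEigs G i ^ 2) = 0 := by
          rw [Finset.sum_sub_distrib, hsq, Finset.sum_const, nsmul_eq_mul]
          rw [hρ2]
          field_simp
          simp
        intro i
        have := (Finset.sum_eq_zero_iff_of_nonneg
          (fun j (_ : j ∈ Finset.univ) => sub_nonneg.mpr (hsqle j))).mp hsum0 i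
          (Finset.mem_univ i)
        linarith [this]
      have hSS : somborMatrix G * somborMatrix G
          = (somborSpecRad G ^ 2) • (1 : Matrix (Fin n) (Fin n) ℝ) := by
        have hq := quad hS 0 (somborSpecRad G ^ 2) fun i => by
          show somborEigs G i ^ 2 = 0 * somborEigs G i + somborSpecRad G ^ 2
          rw [hall i]; ring
        rw [hq, zero_smul, zero_add]
      have hdiagSS : ∀ v, ∑ j, somborMatrix G v j ^ 2 = somborSpecRad G ^ 2 := by
        intro v
        have h1 : (somborMatrix G * somborMatrix G) v v = somborSpecRad G ^ 2 := by
          rw [hSS]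
          simp [Matrix.one_apply_eq]
        rw [← h1, Matrix.mul_apply]
        refine Finset.sum_congr rfl fun j _ => ?_
        rw [sq]
        congr 1
        exact (congrFun (congrFun hS.symm v) j).trans rfl
      by_cases hρz : somborSpecRad G = 0
      · left
        ext i j
        simp only [SimpleGraph.bot_adj, iff_false]
        intro hadj
        have h1 := hdiagSS i
        rw [hρz] at h1
        have h2 : somborMatrix G i j ^ 2 = 0 := by
          have := (Finset.sum_eq_zero_iff_of_nonneg
            (fun k (_ : k ∈ Finset.univ) => sq_nonneg (somborMatrix G i k))).mp
            (by rw [h1]; ring) j (Finset.mem_univ j)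
          exact this
        have := sombor_pos G hadj
        nlinarith
      · right
        have hρpos : 0 < somborSpecRad G := lt_of_le_of_ne hρ0 (Ne.symm hρz)
        intro v
        have hex : ∃ j, G.Adj v j := by
          by_contra hno
          push_neg at hno
          have h1 := hdiagSS v
          have h2 : ∀ j, somborMatrix G v j = 0 := by
            intro j
            unfold somborMatrix
            rw [if_neg (hno j)]
          rw [Finset.sum_congr rfl (fun j _ => by rw [h2 j])] at h1
          simp at h1
          nlinarith
        obtain ⟨j, hj⟩ := hex
        have hle1 : (G.neighborFinset v).card ≤ 1 := by
          rw [Finset.card_le_one]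
          intro a ha b hb
          by_contra hab
          have hadja : G.Adj v a := (G.mem_neighborFinset v a).mp ha
          have hadjb : G.Adj v b := (G.mem_neighborFinset v b).mp hb
          have hzero : (somborMatrix G * somborMatrix G) a b = 0 := by
            rw [hSS]
            simp [Matrix.one_apply_ne hab]
          have hpos : 0 < (somborMatrix G * somborMatrix G) a b := by
            rw [Matrix.mul_apply]
            have hterm : 0 < somborMatrix G a v * somborMatrix G v b :=
              mul_pos (sombor_pos G hadja.symm) (sombor_pos G hadjb)
            refine lt_of_lt_of_le hterm ?_
            refine Finset.single_le_sum (f := fun k => somborMatrix G a k * somborMatrix G k b)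
              (fun k _ => ?_) (Finset.mem_univ v)
            exact mul_nonneg (sombor_nonneg G a k) (sombor_nonneg G k b)
          nlinarith
        have hge1 : 1 ≤ (G.neighborFinset v).card :=
          Finset.card_pos.mpr ⟨j, (G.mem_neighborFinset v j).mpr hj⟩
        have := SimpleGraph.card_neighborFinset_eq_degree G v
        omega
    · -- backward
      rintro (rfl | hdeg)
      · -- empty graph
        have hbot : somborMatrix (⊥ : SimpleGraph (Fin n)) = 0 := by
          ext i j
          unfold somborMatrix
          simp
        have heig0 : ∀ k, somborEigs (⊥ : SimpleGraph (Fin n)) k = 0 := by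
          intro k
          have h1 : somborEigs (⊥ : SimpleGraph (Fin n)) k ^ 2 = 0 := by
            refine eig_sq (somborMatrix_isHermitian _) 0 ?_ k
            rw [hbot]
            simp
          exact pow_eq_zero_iff two_ne_zero |>.mp h1
        have hρbot : somborSpecRad (⊥ : SimpleGraph (Fin n)) = 0 := by
          unfold somborSpecRad
          rw [funext heig0]
          exact ciSup_const
        have hFbot : forgottenIndex (⊥ : SimpleGraph (Fin n)) = 0 := by
          unfold forgottenIndex
          exact Finset.sum_eq_zero fun i _ => bot_deg_cube n i _
        rw [hρbot, hFbot]
        norm_num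
      · -- perfect matching
        have hSentry : ∀ i j, somborMatrix G i j
            = if G.Adj i j then Real.sqrt 2 else 0 := by
          intro i j
          unfold somborMatrix
          rw [hdeg i, hdeg j]
          norm_num
        have hSS2 : somborMatrix G * somborMatrix G
            = (2:ℝ) • (1 : Matrix (Fin n) (Fin n) ℝ) := by
          ext i k
          rw [Matrix.mul_apply]
          by_cases hik : i = k
          · subst hik
            have : ∀ j, somborMatrix G i j * somborMatrix G j i
                = if G.Adj i j then 2 else 0 := by
              intro j
              rw [hSentry i j, hSentry j i]
              by_cases hadj : G.Adj i j
              · rw [if_pos hadj, if_pos hadj.symm, if_pos hadj]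
                rw [Real.mul_self_sqrt (by norm_num : (0:ℝ) ≤ 2)]
              · rw [if_neg hadj, if_neg (fun hc => hadj hc.symm), if_neg hadj]
                ring
            rw [Finset.sum_congr rfl (fun j _ => this j)]
            rw [sum_ite_adj G (fun _ => (2:ℝ)) i, Finset.sum_const,
              SimpleGraph.card_neighborFinset_eq_degree, hdeg i]
            simp [Matrix.one_apply_eq]
          · have : ∀ j, somborMatrix G i j * somborMatrix G j k = 0 := by
              intro j
              by_cases hadj : G.Adj i j
              · by_cases hadj2 : G.Adj j k
                · exfalso
                  have h1 : i ∈ G.neighborFinset j := (G.mem_neighborFinset j i).mpr hadj.symm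
                  have h2 : k ∈ G.neighborFinset j := (G.mem_neighborFinset j k).mpr hadj2
                  have hcard : (G.neighborFinset j).card = 1 := by
                    rw [SimpleGraph.card_neighborFinset_eq_degree, hdeg j]
                  obtain ⟨a, ha⟩ := Finset.card_eq_one.mp hcard
                  rw [ha] at h1 h2
                  simp at h1 h2
                  exact hik (h1.trans h2.symm)
                · rw [hSentry j k, if_neg hadj2]
                  ring
              · rw [hSentry i j, if_neg hadj]
                ring
            rw [Finset.sum_congr rfl (fun j _ => this j)]
            simp [Matrix.one_apply_ne hik]
        have heigsq : ∀ k, somborEigs G k ^ 2 = 2 := fun k => eig_sq hS 2 hSS2 k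
        have heigle : ∀ k, somborEigs G k ≤ Real.sqrt 2 := by
          intro k
          have h1 : |somborEigs G k| = Real.sqrt 2 := by
            rw [← Real.sqrt_sq_eq_abs, heigsq k]
          calc somborEigs G k ≤ |somborEigs G k| := le_abs_self _
            _ = Real.sqrt 2 := h1
        have hex : ∃ k, somborEigs G k = Real.sqrt 2 := by
          by_contra hno
          push_neg at hno
          have hneg : ∀ k, somborEigs G k = -Real.sqrt 2 := by
            intro k
            have h1 : (somborEigs G k - Real.sqrt 2) * (somborEigs G k + Real.sqrt 2) = 0 := by
              have := heigsq k
              have h2 : Real.sqrt 2 ^ 2 = 2 := Real.sq_sqrt (by norm_num)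
              nlinarith
            rcases mul_eq_zero.mp h1 with h2 | h2
            · exact absurd (by linarith) (hno k)
            · linarith
          have : ∑ i, somborEigs G i = -(n * Real.sqrt 2) := by
            rw [Finset.sum_congr rfl (fun i _ => hneg i), Finset.sum_const, nsmul_eq_mul]
            rw [Finset.card_univ, Fintype.card_fin]
            ring
          rw [htr] at this
          have hs2pos : 0 < Real.sqrt 2 := Real.sqrt_pos.mpr (by norm_num)
          nlinarith
        obtain ⟨k₀, hk₀⟩ := hex
        have hρval : somborSpecRad G = Real.sqrt 2 := by
          refine le_antisymm (ciSup_le heigle) ?_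
          rw [← hk₀]
          exact hle k₀
        have hFval : forgottenIndex G = n := by
          unfold forgottenIndex
          rw [Finset.sum_congr rfl (fun i _ => by rw [hdeg i]), Finset.sum_const]
          simp
        rw [hρval, hFval]
        rw [show 2 * (n:ℝ) / n = 2 by field_simp]

  · -- upper equality
    intro hconn
    constructor
    · -- forward: equality implies complete
      intro h
      by_cases hn1 : n = 1
      · subst hn1
        ext i j
        have hij : i = j := Subsingleton.elim i j
        subst hij
        simp
      · have hn2 : 2 ≤ n := by omega
        have hFpos : 0 < forgottenIndex G := by
          have v₀ : Fin n := ⟨0, by omega⟩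
          have hv : ∃ w, G.Adj v₀ w := by
            obtain ⟨w, hw⟩ := Fintype.exists_ne_of_one_lt_card
              (by rw [Fintype.card_fin]; omega) v₀
            obtain ⟨p⟩ := hconn.preconnected v₀ w
            have hcase : v₀ = w ∨ ∃ c, G.Adj v₀ c := by
              cases p with
              | nil => exact Or.inl rfl
              | cons hadj q => exact Or.inr ⟨_, hadj⟩
            rcases hcase with rfl | hc
            · exact absurd rfl hw
            · exact hc
          have hd : 0 < G.degree v₀ := (SimpleGraph.degree_pos_iff_exists_adj G v₀).mpr hv
          have hd1 : (1:ℝ) ≤ (G.degree v₀ : ℝ) := by exact_mod_cast hd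
          have hterm : (1:ℝ) ≤ (G.degree v₀ : ℝ) ^ 3 := by nlinarith [hd1, sq_nonneg ((G.degree v₀ : ℝ) - 1), sq_nonneg ((G.degree v₀ : ℝ) + 1)]
          have hsum : (G.degree v₀ : ℝ) ^ 3 ≤ forgottenIndex G := by
            unfold forgottenIndex
            exact Finset.single_le_sum (f := fun i => (G.degree i : ℝ) ^ 3)
              (fun i _ => by positivity) (Finset.mem_univ v₀)
          linarith
        have hn1R : (0:ℝ) < (n:ℝ) - 1 := by
          have : (2:ℝ) ≤ (n:ℝ) := by exact_mod_cast hn2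
          linarith
        have hρpos : 0 < somborSpecRad G :=
          lt_of_lt_of_le (Real.sqrt_pos.mpr (by positivity)) hlower
        have hρ2' : (n:ℝ) * somborSpecRad G ^ 2 = 2 * ((n:ℝ) - 1) * forgottenIndex G := by
          have h2 : somborSpecRad G ^ 2 = 2 * ((n:ℝ) - 1) * forgottenIndex G / n := by
            rw [h, Real.sq_sqrt (by positivity)]
          rw [h2]
          field_simp
        have hzero : ∑ i ∈ Finset.univ.erase i₀,
            (((n:ℝ) - 1) * somborEigs G i + somborSpecRad G) ^ 2 = 0 := by
          have hexp : ∀ i, (((n:ℝ) - 1) * somborEigs G i + somborSpecRad G) ^ 2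
              = ((n:ℝ)-1)^2 * somborEigs G i ^ 2
                + 2 * ((n:ℝ)-1) * somborSpecRad G * somborEigs G i
                + somborSpecRad G ^ 2 := fun i => by ring
          rw [Finset.sum_congr rfl fun i _ => hexp i]
          rw [Finset.sum_add_distrib, Finset.sum_add_distrib, ← Finset.mul_sum,
            ← Finset.mul_sum, hs1, hs2, Finset.sum_const, nsmul_eq_mul, hcard]
          nlinarith [hρ2']
        have hμi : ∀ i ∈ Finset.univ.erase i₀,
            ((n:ℝ) - 1) * somborEigs G i = -somborSpecRad G := by
          intro i hi
          have := (Finset.sum_eq_zero_iff_of_nonneg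
            (fun j (_ : j ∈ Finset.univ.erase i₀) => sq_nonneg _)).mp hzero i hi
          have h2 := pow_eq_zero_iff (n := 2) two_ne_zero |>.mp this
          linarith
        set μ : ℝ := -somborSpecRad G / ((n:ℝ) - 1) with hμ
        have hμval : ∀ i ∈ Finset.univ.erase i₀, somborEigs G i = μ := by
          intro i hi
          have h1 := hμi i hi
          rw [hμ]
          field_simp
          linarith
        have hquad : ∀ i, somborEigs G i ^ 2
            = (somborSpecRad G + μ) * somborEigs G i + (-(somborSpecRad G * μ)) := by
          intro i
          by_cases hi : i = i₀
          · subst hi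
            rw [← hρeq]
            ring
          · rw [hμval i (Finset.mem_erase.mpr ⟨hi, Finset.mem_univ i⟩)]
            ring
        have hSSq : somborMatrix G * somborMatrix G
            = (somborSpecRad G + μ) • somborMatrix G
              + (-(somborSpecRad G * μ)) • (1 : Matrix (Fin n) (Fin n) ℝ) := by
          refine quad hS _ _ fun i => ?_
          show somborEigs G i ^ 2
            = (somborSpecRad G + μ) * somborEigs G i + (-(somborSpecRad G * μ))
          exact hquad i
        have hnocommon : ∀ i k, i ≠ k → ¬G.Adj i k →
            ∀ j, ¬(G.Adj i j ∧ G.Adj j k) := by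
          rintro i k hik hnadj j ⟨h1, h2⟩
          have hSik : somborMatrix G i k = 0 := by
            unfold somborMatrix
            rw [if_neg hnadj]
          have hz : (somborMatrix G * somborMatrix G) i k = 0 := by
            rw [hSSq]
            simp [Matrix.add_apply, Matrix.smul_apply, hSik, Matrix.one_apply_ne hik]
          have hpos : 0 < (somborMatrix G * somborMatrix G) i k := by
            rw [Matrix.mul_apply]
            have hterm : 0 < somborMatrix G i j * somborMatrix G j k :=
              mul_pos (sombor_pos G h1) (sombor_pos G h2)
            refine lt_of_lt_of_le hterm ?_
            refine Finset.single_le_sum (f := fun l => somborMatrix G i l * somborMatrix G l k)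
              (fun l _ => mul_nonneg (sombor_nonneg G i l) (sombor_nonneg G l k))
              (Finset.mem_univ j)
          linarith
        have key : ∀ (a b : Fin n), G.Walk a b → a = b ∨ G.Adj a b := by
          intro a b p
          induction p with
          | nil => exact Or.inl rfl
          | @cons a c b hac p ih =>
            rcases ih with rfl | hcb
            · exact Or.inr hac
            · by_cases hab : a = b
              · exact Or.inl hab
              · by_cases hadj : G.Adj a b
                · exact Or.inr hadj
                · exact absurd ⟨hac, hcb⟩ (hnocommon a b hab hadj c)
        ext i j
        simp only [SimpleGraph.top_adj]
        constructor
        · exact fun h' => G.ne_of_adj h'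
        · intro hne
          obtain ⟨p⟩ := hconn.preconnected i j
          rcases key i j p with rfl | hadj
          · exact absurd rfl hne
          · exact hadj
    · -- backward: complete graph attains the bound
      rintro rfl
      have hn1R : (0:ℝ) ≤ (n:ℝ) - 1 := by
        have : (1:ℝ) ≤ (n:ℝ) := by exact_mod_cast hn
        linarith
      have hdtop : ∀ (v : Fin n) (inst : Fintype ((⊤ : SimpleGraph (Fin n)).neighborSet v)),
          ((@SimpleGraph.degree (Fin n) ⊤ v inst : ℕ) : ℝ) = (n:ℝ) - 1 := by
        intro v inst
        rw [top_deg n v inst, Nat.cast_sub hn, Nat.cast_one]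
      have hF : forgottenIndex (⊤ : SimpleGraph (Fin n)) = n * ((n:ℝ) - 1) ^ 3 := by
        unfold forgottenIndex
        rw [Finset.sum_congr rfl fun i _ => by rw [hdtop i _], Finset.sum_const,
          Finset.card_univ, Fintype.card_fin, nsmul_eq_mul]
      have hSe : ∀ i j : Fin n, somborMatrix (⊤ : SimpleGraph (Fin n)) i j
          = if i = j then 0 else ((n:ℝ) - 1) * Real.sqrt 2 := by
        intro i j
        unfold somborMatrix
        by_cases hij : i = j
        · subst hij
          rw [if_neg (SimpleGraph.irrefl _), if_pos rfl]
        · rw [if_pos (by simp [hij]), if_neg hij, hdtop i _, hdtop j _]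
          rw [show ((n:ℝ)-1)^2 + ((n:ℝ)-1)^2 = (((n:ℝ)-1)*Real.sqrt 2)^2 by
            rw [mul_pow, Real.sq_sqrt (by norm_num : (0:ℝ) ≤ 2)]; ring]
          exact Real.sqrt_sq (by positivity)
      have hones : (fun _ : Fin n => (1:ℝ)) ⬝ᵥ (fun _ : Fin n => (1:ℝ)) = (n:ℝ) := by
        unfold dotProduct
        simp [Finset.card_univ]
      have hray : (fun _ : Fin n => (1:ℝ)) ⬝ᵥ
          (somborMatrix (⊤ : SimpleGraph (Fin n)) *ᵥ (fun _ : Fin n => (1:ℝ)))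
          = (n:ℝ) * (((n:ℝ) - 1) ^ 2 * Real.sqrt 2) := by
        unfold dotProduct Matrix.mulVec dotProduct
        have hrow : ∀ i : Fin n, ∑ j, somborMatrix (⊤ : SimpleGraph (Fin n)) i j * 1
            = ((n:ℝ) - 1) * (((n:ℝ) - 1) * Real.sqrt 2) := by
          intro i
          have : ∀ j, somborMatrix (⊤ : SimpleGraph (Fin n)) i j * 1
              = ((n:ℝ) - 1) * Real.sqrt 2
                - (if i = j then ((n:ℝ) - 1) * Real.sqrt 2 else 0) := by
            intro j
            rw [hSe i j]
            by_cases hij : i = j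
            · rw [if_pos hij, if_pos hij]; ring
            · rw [if_neg hij, if_neg hij]; ring
          rw [Finset.sum_congr rfl fun j _ => this j, Finset.sum_sub_distrib,
            Finset.sum_const, Finset.card_univ, Fintype.card_fin, nsmul_eq_mul]
          have hsingle : ∑ j : Fin n, (if i = j then ((n:ℝ) - 1) * Real.sqrt 2 else 0)
              = ((n:ℝ) - 1) * Real.sqrt 2 := by simp
          rw [hsingle]
          ring
        rw [Finset.sum_congr rfl fun i _ => by rw [one_mul, hrow i]]
        rw [Finset.sum_const, Finset.card_univ, Fintype.card_fin, nsmul_eq_mul]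
        ring
      have hval : Real.sqrt (2 * ((n:ℝ) - 1) * forgottenIndex (⊤ : SimpleGraph (Fin n)) / n)
          = ((n:ℝ) - 1) ^ 2 * Real.sqrt 2 := by
        rw [hF]
        rw [show 2 * ((n:ℝ)-1) * ((n:ℝ) * ((n:ℝ)-1)^3) / n
            = (((n:ℝ)-1)^2 * Real.sqrt 2)^2 by
          rw [mul_pow, Real.sq_sqrt (by norm_num : (0:ℝ) ≤ 2)]
          field_simp]
        exact Real.sqrt_sq (by positivity)
      rw [hval]
      refine le_antisymm (by rw [← hval]; exact hupper) ?_
      have hup := @rayleigh_upper (Fin n) _ (fun a b => Classical.propDecidable (a = b))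
        (somborMatrix (⊤ : SimpleGraph (Fin n))) hS
        (somborSpecRad (⊤ : SimpleGraph (Fin n))) hle (fun _ => (1:ℝ))
      rw [hray, hones] at hup
      nlinarith [hup]
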